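/- arXiv:1005.5630 — 2 statements merged into one kernel-verified Lean document; each statement's English description precedes it below -/
import Mathlib

section
/- Let A be a process executing the quasi rendezvous protocol. Whatever the execution, the system reaches a configuration in which A's program counter is no longer within the repeat loop; in particular no process stays in the repeat loop forever. -/
/-!
An operational model of the quasi rendezvous protocol of Johnen, Lavallée, Lavault.

Each process `A` owns, for each neighbour `B_i`, a register `Write_{AB_i}` and two
one-bit registers `Control_{AB_i}` and `CheckControl_{AB_i}`; communication is under
read/write atomicity.
-/

structure Network where
  Proc : Type
  deg : Proc → ℕ
  deg_pos : ∀ p, 0 < deg p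
  nbr : (p : Proc) → Fin (deg p) → Proc
  nbr_ne : ∀ p i, nbr p i ≠ p
  nbr_inj : ∀ p, Function.Injective (nbr p)
  nbr_symm : ∀ p i, ∃ j, nbr (nbr p i) j = p

namespace QR

open Classical

/-- Program counter of a process with `n` neighbours running the quasi rendezvous
protocol.  `wr i k` : writing phase, neighbour `i`, sub-action `k`
(`k = 0`: `write(Write_{AB_i}, get_i)`, `k = 1`: `c_i ← read(Control_{AB_i})`,
`k = 2`: `write(Control_{AB_i}, (c_i+1) mod 2)`);
`lp i k` : repeat loop, neighbour `i`, sub-action `k`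
(`k = 0`: `b_i ← read(Control_{B_iA})`, `k = 1`: `d_i ← read(CheckControl_{AB_i})`,
then if `b_i ≠ d_i` continue with `k = 2`: `r_i ← read(Write_{B_iA})` and
`k = 3`: `write(CheckControl_{AB_i}, b_i)`, else jump to `k = 4`;
`k = 4`: `c_i ← read(Control_{AB_i})`, `k = 5`: `l_i ← read(CheckControl_{B_iA})`,
followed, after the last neighbour, by the (local) exit test `∀ i, c_i = l_i`). -/
inductive PC (n : ℕ) : Type
  | wr : Fin n → Fin 3 → PC n
  | lp : Fin n → Fin 6 → PC n

/-- An atomic action (read/write atomicity); `A B` names the owner and the direction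
of the register, e.g. `readC A B` is a read of `Control_{AB}` and `writeCC A B b`
writes the bit `b` into `CheckControl_{AB}`. -/
inductive Act (Proc Val : Type) : Type
  | readW : Proc → Proc → Act Proc Val
  | writeW : Proc → Proc → Val → Act Proc Val
  | readC : Proc → Proc → Act Proc Val
  | writeC : Proc → Proc → Bool → Act Proc Val
  | readCC : Proc → Proc → Act Proc Val
  | writeCC : Proc → Proc → Bool → Act Proc Val

/-- A configuration: register contents and local states (pc and local variables
`r_i`, `b_i`, `d_i`, `c_i`, `l_i`). -/
structure Config (Net : Network) (Val : Type) : Type where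
  regW : Net.Proc → Net.Proc → Val
  regC : Net.Proc → Net.Proc → Bool
  regCC : Net.Proc → Net.Proc → Bool
  pc : (p : Net.Proc) → PC (Net.deg p)
  rv : (p : Net.Proc) → Fin (Net.deg p) → Val
  bv : (p : Net.Proc) → Fin (Net.deg p) → Bool
  dv : (p : Net.Proc) → Fin (Net.deg p) → Bool
  cv : (p : Net.Proc) → Fin (Net.deg p) → Bool
  lv : (p : Net.Proc) → Fin (Net.deg p) → Bool

def finSucc? {n : ℕ} (i : Fin n) : Option (Fin n) :=
  if h : i.1 + 1 < n then some ⟨i.1 + 1, h⟩ else none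

noncomputable def upd2 {Proc : Type} {β : Type} (f : Proc → Proc → β) (a b : Proc) (v : β) :
    Proc → Proc → β :=
  fun x y => if x = a ∧ y = b then v else f x y

/-- One atomic step of process `p`, labelled by the action performed.  The value
written by `write(Write_{AB_i}, get_i)` is arbitrary (`get_i` is an arbitrary helper
function returning the next message). -/
inductive Step (Net : Network) (Val : Type) :
    Config Net Val → Net.Proc → Act Net.Proc Val → Config Net Val → Prop
  | writeW (c : Config Net Val) (p : Net.Proc) (i : Fin (Net.deg p)) (v : Val)
      (h : c.pc p = .wr i 0) :
      Step Net Val c p (.writeW p (Net.nbr p i) v)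
        { c with
          regW := upd2 c.regW p (Net.nbr p i) v
          pc := Function.update c.pc p (PC.wr i 1) }
  | readOwnC (c : Config Net Val) (p : Net.Proc) (i : Fin (Net.deg p))
      (h : c.pc p = .wr i 1) :
      Step Net Val c p (.readC p (Net.nbr p i))
        { c with
          cv := Function.update c.cv p (Function.update (c.cv p) i (c.regC p (Net.nbr p i)))
          pc := Function.update c.pc p (PC.wr i 2) }
  | writeOwnC (c : Config Net Val) (p : Net.Proc) (i : Fin (Net.deg p))
      (h : c.pc p = .wr i 2) :
      Step Net Val c p (.writeC p (Net.nbr p i) (!(c.cv p i)))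
        { c with
          regC := upd2 c.regC p (Net.nbr p i) (!(c.cv p i))
          pc := Function.update c.pc p
            (match finSucc? i with
             | some j => PC.wr j 0
             | none => PC.lp ⟨0, Net.deg_pos p⟩ 0) }
  | readNbrC (c : Config Net Val) (p : Net.Proc) (i : Fin (Net.deg p))
      (h : c.pc p = .lp i 0) :
      Step Net Val c p (.readC (Net.nbr p i) p)
        { c with
          bv := Function.update c.bv p (Function.update (c.bv p) i (c.regC (Net.nbr p i) p))
          pc := Function.update c.pc p (PC.lp i 1) }
  | readOwnCC (c : Config Net Val) (p : Net.Proc) (i : Fin (Net.deg p))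
      (h : c.pc p = .lp i 1) :
      Step Net Val c p (.readCC p (Net.nbr p i))
        { c with
          dv := Function.update c.dv p
            (Function.update (c.dv p) i (c.regCC p (Net.nbr p i)))
          pc := Function.update c.pc p
            (if c.bv p i ≠ c.regCC p (Net.nbr p i) then PC.lp i 2 else PC.lp i 4) }
  | readNbrW (c : Config Net Val) (p : Net.Proc) (i : Fin (Net.deg p))
      (h : c.pc p = .lp i 2) :
      Step Net Val c p (.readW (Net.nbr p i) p)
        { c with
          rv := Function.update c.rv p (Function.update (c.rv p) i (c.regW (Net.nbr p i) p))
          pc := Function.update c.pc p (PC.lp i 3) }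
  | writeOwnCC (c : Config Net Val) (p : Net.Proc) (i : Fin (Net.deg p))
      (h : c.pc p = .lp i 3) :
      Step Net Val c p (.writeCC p (Net.nbr p i) (c.bv p i))
        { c with
          regCC := upd2 c.regCC p (Net.nbr p i) (c.bv p i)
          pc := Function.update c.pc p (PC.lp i 4) }
  | readOwnC' (c : Config Net Val) (p : Net.Proc) (i : Fin (Net.deg p))
      (h : c.pc p = .lp i 4) :
      Step Net Val c p (.readC p (Net.nbr p i))
        { c with
          cv := Function.update c.cv p (Function.update (c.cv p) i (c.regC p (Net.nbr p i)))
          pc := Function.update c.pc p (PC.lp i 5) }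
  | readNbrCC (c : Config Net Val) (p : Net.Proc) (i : Fin (Net.deg p))
      (h : c.pc p = .lp i 5) :
      Step Net Val c p (.readCC (Net.nbr p i) p)
        { c with
          lv := Function.update c.lv p (Function.update (c.lv p) i (c.regCC (Net.nbr p i) p))
          pc := Function.update c.pc p
            (match finSucc? i with
             | some j => PC.lp j 0
             | none =>
               if ∀ j, c.cv p j = Function.update (c.lv p) i (c.regCC (Net.nbr p i) p) j
               then PC.wr ⟨0, Net.deg_pos p⟩ 0
               else PC.lp ⟨0, Net.deg_pos p⟩ 0) }

/-- An execution: an infinite sequence of configurations, starting from an arbitrary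
configuration, where at instant `t` the scheduled process performs one atomic action. -/
structure Exec (Net : Network) (Val : Type) : Type where
  cfg : ℕ → Config Net Val
  sched : ℕ → Net.Proc
  act : ℕ → Act Net.Proc Val
  step : ∀ t, Step Net Val (cfg t) (sched t) (act t) (cfg (t + 1))

def Enabled {Net : Network} {Val : Type} (c : Config Net Val) (p : Net.Proc) : Prop :=
  ∃ a c', Step Net Val c p a c'

/-- Fair scheduler: any process that can continuously perform an action eventually
performs one. -/
def Exec.Fair {Net : Network} {Val : Type} (e : Exec Net Val) : Prop :=
  ∀ p t, (∀ u, t ≤ u → Enabled (e.cfg u) p) → ∃ u, t ≤ u ∧ e.sched u = p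

/-- The program counter of `p` is inside the repeat loop. -/
def InLoop {Net : Network} {Val : Type} (c : Config Net Val) (p : Net.Proc) : Prop :=
  ∃ i k, c.pc p = PC.lp i k

/-- In the quasi rendezvous protocol, `B` allows `A` to write iff
`CheckControl_{BA} = Control_{AB}`. -/
def Allows {Net : Network} {Val : Type} (c : Config Net Val) (B A : Net.Proc) : Prop :=
  c.regCC B A = c.regC A B

/-- `B` is a neighbour of `A`. -/
def Neighbour (Net : Network) (A B : Net.Proc) : Prop := ∃ i, Net.nbr A i = B

/-- At instant `t`, process `A` writes (some value) into its register `Write_{AB}`. -/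
def WritesW {Net : Network} {Val : Type} (e : Exec Net Val) (A B : Net.Proc) (t : ℕ) : Prop :=
  e.sched t = A ∧ ∃ v, e.act t = Act.writeW A B v

/-- At instant `t`, process `B` reads from the register `Write_{AB}` of its neighbour `A`. -/
def ReadsW {Net : Network} {Val : Type} (e : Exec Net Val) (A B : Net.Proc) (t : ℕ) : Prop :=
  e.sched t = B ∧ e.act t = Act.readW A B

/-- Process `P` has executed (at least) its first three atomic actions before
instant `t`. -/
def DidThree {Net : Network} {Val : Type} (e : Exec Net Val) (P : Net.Proc) (t : ℕ) : Prop :=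
  ∃ u1 u2 u3, u1 < u2 ∧ u2 < u3 ∧ u3 < t ∧
    e.sched u1 = P ∧ e.sched u2 = P ∧ e.sched u3 = P

/-- `A` performs a full (complete) writing of `Write_{AB}` at instants
`t1 < t2 < t3` (with no other action of `A` in between): the sequence
`write(Write_{AB}, get)`; `c ← read(Control_{AB})`;
`write(Control_{AB}, (c+1) mod 2)`. -/
def FullWriting {Net : Network} {Val : Type} (e : Exec Net Val) (A B : Net.Proc)
    (t1 t2 t3 : ℕ) : Prop :=
  t1 < t2 ∧ t2 < t3 ∧
  e.sched t1 = A ∧ e.sched t2 = A ∧ e.sched t3 = A ∧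
  (∃ v, e.act t1 = Act.writeW A B v) ∧
  e.act t2 = Act.readC A B ∧
  e.act t3 = Act.writeC A B (!(e.cfg t2).regC A B) ∧
  (∀ u, t1 < u → u < t3 → u ≠ t2 → e.sched u ≠ A)

end QR

namespace QRAux
open QR Classical

variable {Net : Network} {Val : Type}

/-- Frame lemma: a step of `p` does not change the local state and the
registers owned by any `q ≠ p`. -/
lemma step_frame {c c' : Config Net Val} {p : Net.Proc} {a : Act Net.Proc Val}
    (h : Step Net Val c p a c') (q : Net.Proc) (hq : q ≠ p) :
    c'.pc q = c.pc q ∧ c'.bv q = c.bv q ∧ c'.cv q = c.cv q ∧ c'.lv q = c.lv q ∧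
    c'.dv q = c.dv q ∧ (∀ x, c'.regC q x = c.regC q x) ∧
    (∀ x, c'.regCC q x = c.regCC q x) ∧ (∀ x, c'.regW q x = c.regW q x) := by
  cases h <;>
    simp_all [upd2, Function.update_of_ne hq]

/-- Every process is always enabled. -/
lemma enabled_all (c : Config Net Val) (p : Net.Proc) : Enabled c p := by
  rcases hpc : c.pc p with ⟨i, k⟩ | ⟨i, k⟩
  · rcases k with ⟨kv, hk⟩
    interval_cases kv
    · exact ⟨_, _, Step.writeW c p i (c.regW p p) hpc⟩
    · exact ⟨_, _, Step.readOwnC c p i hpc⟩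
    · exact ⟨_, _, Step.writeOwnC c p i hpc⟩
  · rcases k with ⟨kv, hk⟩
    interval_cases kv
    · exact ⟨_, _, Step.readNbrC c p i hpc⟩
    · exact ⟨_, _, Step.readOwnCC c p i hpc⟩
    · exact ⟨_, _, Step.readNbrW c p i hpc⟩
    · exact ⟨_, _, Step.writeOwnCC c p i hpc⟩
    · exact ⟨_, _, Step.readOwnC' c p i hpc⟩
    · exact ⟨_, _, Step.readNbrCC c p i hpc⟩

/-- A fair scheduler schedules every process at every horizon; least such time. -/
lemma nextP (e : Exec Net Val) (hfair : e.Fair) (p : Net.Proc) (t0 : ℕ) :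
    ∃ w, t0 ≤ w ∧ e.sched w = p ∧ ∀ x, t0 ≤ x → x < w → e.sched x ≠ p := by
  obtain ⟨u, hu, hs⟩ := hfair p t0 (fun u _ => enabled_all _ p)
  have hex : ∃ w, t0 ≤ w ∧ e.sched w = p := ⟨u, hu, hs⟩
  classical
  obtain ⟨hw1, hw2⟩ := Nat.find_spec hex
  refine ⟨Nat.find hex, hw1, hw2, fun x hx1 hx2 hx3 => ?_⟩
  exact Nat.find_min hex hx2 ⟨hx1, hx3⟩

/-- If `p` is not scheduled on `[u, w)` then its local state and registers
are unchanged. -/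
lemma interval_frame (e : Exec Net Val) (p : Net.Proc) {u w : ℕ} (huw : u ≤ w)
    (hns : ∀ x, u ≤ x → x < w → e.sched x ≠ p) :
    (e.cfg w).pc p = (e.cfg u).pc p ∧ (e.cfg w).bv p = (e.cfg u).bv p ∧
    (e.cfg w).cv p = (e.cfg u).cv p ∧ (e.cfg w).lv p = (e.cfg u).lv p ∧
    (∀ x, (e.cfg w).regC p x = (e.cfg u).regC p x) ∧
    (∀ x, (e.cfg w).regCC p x = (e.cfg u).regCC p x) := by
  induction w with
  | zero =>
    have : u = 0 := Nat.le_zero.mp huw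
    subst this; exact ⟨rfl, rfl, rfl, rfl, fun _ => rfl, fun _ => rfl⟩
  | succ w ih =>
    rcases Nat.lt_or_ge u (w + 1) with hlt | hge
    · have huw' : u ≤ w := Nat.lt_succ_iff.mp hlt
      have hns' : ∀ x, u ≤ x → x < w → e.sched x ≠ p :=
        fun x h1 h2 => hns x h1 (Nat.lt_succ_of_lt h2)
      obtain ⟨h1, h2, h3, h4, h5, h6⟩ := ih huw' hns'
      have hnp : p ≠ e.sched w := fun hh =>
        hns w huw' (Nat.lt_succ_self w) hh.symm
      obtain ⟨f1, f2, f3, f4, _, f6, f7, _⟩ := step_frame (e.step w) p hnp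
      exact ⟨f1.trans h1, f2.trans h2, f3.trans h3, f4.trans h4,
        fun x => (f6 x).trans (h5 x), fun x => (f7 x).trans (h6 x)⟩
    · have : u = w + 1 := le_antisymm huw hge
      subst this; exact ⟨rfl, rfl, rfl, rfl, fun _ => rfl, fun _ => rfl⟩

/-- Rank of a program counter along the cyclic program text. -/
def lrank {n : ℕ} : PC n → ℕ
  | .wr i k => 3 * i.1 + k.1
  | .lp i k => 3 * n + 6 * i.1 + k.1

lemma lrank_lt {n : ℕ} (q : PC n) : lrank q < 9 * n := by
  cases q with
  | wr i k => have := i.2; have := k.2; simp only [lrank]; omega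
  | lp i k => have := i.2; have := k.2; simp only [lrank]; omega

lemma lrank_eq_max {n : ℕ} (q : PC n) (h : lrank q + 1 = 9 * n) :
    ∃ hn : n - 1 < n, q = PC.lp ⟨n - 1, hn⟩ 5 := by
  cases q with
  | wr i k => have := i.2; have := k.2; simp only [lrank] at h; omega
  | lp i k =>
    have hi := i.2; have hk := k.2
    simp only [lrank] at h
    have hi' : i.1 = n - 1 := by omega
    have hk' : k.1 = 5 := by omega
    refine ⟨by omega, ?_⟩
    congr 1
    · exact Fin.ext hi'
    · exact Fin.ext (by simpa using hk')

lemma step_rank {c c' : Config Net Val} {p : Net.Proc} {a : Act Net.Proc Val}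
    (h : Step Net Val c p a c')
    (hne : lrank (c.pc p) + 1 < 9 * Net.deg p) :
    lrank (c.pc p) < lrank (c'.pc p) ∧ lrank (c'.pc p) < 9 * Net.deg p := by
  cases h with
  | writeW i v hpc =>
    have := i.2
    simp only [hpc, Function.update_self, lrank]; omega
  | readOwnC i hpc =>
    have := i.2
    simp only [hpc, Function.update_self, lrank]; omega
  | writeOwnC i hpc =>
    have := i.2
    by_cases hs : i.1 + 1 < Net.deg p <;>
      simp only [hpc, Function.update_self, lrank, finSucc?, hs, dif_pos, dif_neg,
        not_false_iff] <;> omega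
  | readNbrC i hpc =>
    have := i.2
    simp only [hpc, Function.update_self, lrank]; omega
  | readOwnCC i hpc =>
    have := i.2
    by_cases hb : c.bv p i ≠ c.regCC p (Net.nbr p i)
    · simp only [hpc, Function.update_self, if_pos hb, lrank]; omega
    · simp only [hpc, Function.update_self, if_neg hb, lrank]; omega
  | readNbrW i hpc =>
    have := i.2
    simp only [hpc, Function.update_self, lrank]; omega
  | writeOwnCC i hpc =>
    have := i.2
    simp only [hpc, Function.update_self, lrank]; omega
  | readOwnC' i hpc =>
    have := i.2
    simp only [hpc, Function.update_self, lrank]; omega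
  | readNbrCC i hpc =>
    have := i.2
    by_cases hs : i.1 + 1 < Net.deg p
    · simp only [hpc, Function.update_self, lrank, finSucc?, hs, dif_pos]; omega
    · exfalso
      simp only [hpc, lrank] at hne; omega

/-- As `step_rank`, but staying below a target rank `3n + 6j`. -/
lemma step_rank_target {c c' : Config Net Val} {p : Net.Proc} {a : Act Net.Proc Val}
    (h : Step Net Val c p a c') (j : ℕ) (hj : j < Net.deg p)
    (hlt : lrank (c.pc p) < 3 * Net.deg p + 6 * j) :
    lrank (c.pc p) < lrank (c'.pc p) ∧ lrank (c'.pc p) ≤ 3 * Net.deg p + 6 * j := by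
  cases h with
  | writeW i v hpc =>
    have := i.2
    simp only [hpc, Function.update_self, lrank] at *; omega
  | readOwnC i hpc =>
    have := i.2
    simp only [hpc, Function.update_self, lrank] at *; omega
  | writeOwnC i hpc =>
    have := i.2
    by_cases hs : i.1 + 1 < Net.deg p <;>
      simp only [hpc, Function.update_self, lrank, finSucc?, hs, dif_pos, dif_neg,
        not_false_iff] at * <;> omega
  | readNbrC i hpc =>
    have := i.2
    simp only [hpc, Function.update_self, lrank] at *; omega
  | readOwnCC i hpc =>
    have := i.2
    by_cases hb : c.bv p i ≠ c.regCC p (Net.nbr p i)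
    · simp only [hpc, Function.update_self, if_pos hb, lrank] at *; omega
    · simp only [hpc, Function.update_self, if_neg hb, lrank] at *; omega
  | readNbrW i hpc =>
    have := i.2
    simp only [hpc, Function.update_self, lrank] at *; omega
  | writeOwnCC i hpc =>
    have := i.2
    simp only [hpc, Function.update_self, lrank] at *; omega
  | readOwnC' i hpc =>
    have := i.2
    simp only [hpc, Function.update_self, lrank] at *; omega
  | readNbrCC i hpc =>
    have := i.2
    by_cases hs : i.1 + 1 < Net.deg p
    · simp only [hpc, Function.update_self, lrank, finSucc?, hs, dif_pos] at *; omega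
    · exfalso
      simp only [hpc, lrank] at hlt; omega

/-- Generic reachability: if every step of `p` from an `I`-state that is not a
`G`-state decreases the measure `μ` (preserving `I`), then from any `I`-state
`p` is eventually scheduled in a `G`-state. -/
lemma pcReach (e : Exec Net Val) (hfair : e.Fair) (p : Net.Proc) (u0 : ℕ)
    (I G : PC (Net.deg p) → Prop) (μ : PC (Net.deg p) → ℕ)
    (hstep : ∀ u, u0 ≤ u → e.sched u = p → I ((e.cfg u).pc p) →
      ¬ G ((e.cfg u).pc p) →
      I ((e.cfg (u + 1)).pc p) ∧ μ ((e.cfg (u + 1)).pc p) < μ ((e.cfg u).pc p)) :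
    ∀ u, u0 ≤ u → I ((e.cfg u).pc p) →
      ∃ w, u ≤ w ∧ e.sched w = p ∧ G ((e.cfg w).pc p) := by
  have main : ∀ m u, u0 ≤ u → I ((e.cfg u).pc p) → μ ((e.cfg u).pc p) ≤ m →
      ∃ w, u ≤ w ∧ e.sched w = p ∧ G ((e.cfg w).pc p) := by
    intro m
    induction m using Nat.strong_induction_on with
    | _ m ih =>
      intro u hu hI hμ
      obtain ⟨w, hw1, hw2, hw3⟩ := nextP e hfair p u
      have hfr : (e.cfg w).pc p = (e.cfg u).pc p := (interval_frame e p hw1 hw3).1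
      by_cases hG : G ((e.cfg u).pc p)
      · exact ⟨w, hw1, hw2, by rw [hfr]; exact hG⟩
      · have hI' : I ((e.cfg w).pc p) := by rw [hfr]; exact hI
        have hG' : ¬ G ((e.cfg w).pc p) := by rw [hfr]; exact hG
        obtain ⟨hI2, hlt⟩ := hstep w (le_trans hu hw1) hw2 hI' hG'
        have hm : μ ((e.cfg (w + 1)).pc p) < m := by
          rw [hfr] at hlt; omega
        obtain ⟨w', h1, h2, h3⟩ :=
          ih _ hm (w + 1) (by omega) hI2 le_rfl
        exact ⟨w', by omega, h2, h3⟩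
  intro u hu hI
  exact main (μ ((e.cfg u).pc p)) u hu hI le_rfl

/-- If `p` is in the loop at `c.pc p` then a step does not change `regC A ·`
for `A` in the loop. -/
lemma step_regC_loop {c c' : Config Net Val} {p : Net.Proc} {a : Act Net.Proc Val}
    (h : Step Net Val c p a c') (A : Net.Proc) (hA : InLoop c A) :
    ∀ x, c'.regC A x = c.regC A x := by
  cases h with
  | writeOwnC i hpc =>
    intro x
    simp only [upd2]
    split
    · next hx =>
      exfalso
      obtain ⟨rfl, -⟩ := hx
      obtain ⟨i', k', hpc'⟩ := hA
      rw [hpc] at hpc'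
      exact PC.noConfusion rfl (heq_of_eq hpc')
    · rfl
  | writeW i v hpc => intro x; rfl
  | readOwnC i hpc => intro x; rfl
  | readNbrC i hpc => intro x; rfl
  | readOwnCC i hpc => intro x; rfl
  | readNbrW i hpc => intro x; rfl
  | writeOwnCC i hpc => intro x; rfl
  | readOwnC' i hpc => intro x; rfl
  | readNbrCC i hpc => intro x; rfl

/-- `Control_{AB}` registers are constant while `A` stays in the loop. -/
lemma regC_const (e : Exec Net Val) (A : Net.Proc) (t : ℕ)
    (hcon : ∀ u, t ≤ u → InLoop (e.cfg u) A) :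
    ∀ u, t ≤ u → ∀ x, (e.cfg u).regC A x = (e.cfg t).regC A x := by
  intro u
  induction u with
  | zero => intro hu x; have ht : t = 0 := Nat.le_zero.mp hu; rw [ht]
  | succ u ih =>
    intro hu x
    rcases Nat.lt_or_ge t (u + 1) with hlt | hge
    · have htu : t ≤ u := Nat.lt_succ_iff.mp hlt
      rw [← ih htu x]
      by_cases hA : e.sched u = A
      · exact step_regC_loop (e.step u) A (hA ▸ hcon u htu) x
      · exact (step_frame (e.step u) A (fun hh => hA hh.symm)).2.2.2.2.2.1 x
    · have : t = u + 1 := le_antisymm hu hge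
      rw [this]

/-- Action of a step at `lp j 0` (read of the neighbour's `Control`). -/
lemma step_lp0 {c c' : Config Net Val} {p : Net.Proc} {a : Act Net.Proc Val}
    (h : Step Net Val c p a c') {j : Fin (Net.deg p)} (hpc : c.pc p = PC.lp j 0) :
    c'.pc p = PC.lp j 1 ∧ c'.bv p j = c.regC (Net.nbr p j) p ∧
    (∀ x, c'.regCC p x = c.regCC p x) := by
  cases h with
  | readNbrC i hpc' =>
    rw [hpc] at hpc'; simp only [PC.lp.injEq] at hpc'
    obtain ⟨rfl, -⟩ : j = i ∧ _ := by
      constructor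
      · exact hpc'.1
      · exact trivial
    exact ⟨by simp, by simp, fun x => rfl⟩
  | writeW i v hpc' => rw [hpc] at hpc'; exact absurd hpc' (by simp)
  | readOwnC i hpc' => rw [hpc] at hpc'; exact absurd hpc' (by simp)
  | writeOwnC i hpc' => rw [hpc] at hpc'; exact absurd hpc' (by simp)
  | readOwnCC i hpc' => rw [hpc] at hpc'; exact absurd hpc' (by simp)
  | readNbrW i hpc' => rw [hpc] at hpc'; exact absurd hpc' (by simp)
  | writeOwnCC i hpc' => rw [hpc] at hpc'; exact absurd hpc' (by simp)
  | readOwnC' i hpc' => rw [hpc] at hpc'; exact absurd hpc' (by simp)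
  | readNbrCC i hpc' => rw [hpc] at hpc'; exact absurd hpc' (by simp)

/-- Action of a step at `lp j 1` (read of own `CheckControl`, branch). -/
lemma step_lp1 {c c' : Config Net Val} {p : Net.Proc} {a : Act Net.Proc Val}
    (h : Step Net Val c p a c') {j : Fin (Net.deg p)} (hpc : c.pc p = PC.lp j 1) :
    c'.pc p = (if c.bv p j ≠ c.regCC p (Net.nbr p j) then PC.lp j 2 else PC.lp j 4) ∧
    c'.bv p = c.bv p ∧ (∀ x, c'.regCC p x = c.regCC p x) := by
  cases h with
  | readOwnCC i hpc' =>
    rw [hpc] at hpc'; simp only [PC.lp.injEq] at hpc'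
    obtain ⟨rfl, -⟩ : j = i ∧ _ := ⟨hpc'.1, trivial⟩
    exact ⟨by simp, by simp, fun x => rfl⟩
  | writeW i v hpc' => rw [hpc] at hpc'; exact absurd hpc' (by simp)
  | readOwnC i hpc' => rw [hpc] at hpc'; exact absurd hpc' (by simp)
  | writeOwnC i hpc' => rw [hpc] at hpc'; exact absurd hpc' (by simp)
  | readNbrC i hpc' => rw [hpc] at hpc'; exact absurd hpc' (by simp)
  | readNbrW i hpc' => rw [hpc] at hpc'; exact absurd hpc' (by simp)
  | writeOwnCC i hpc' => rw [hpc] at hpc'; exact absurd hpc' (by simp)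
  | readOwnC' i hpc' => rw [hpc] at hpc'; exact absurd hpc' (by simp)
  | readNbrCC i hpc' => rw [hpc] at hpc'; exact absurd hpc' (by simp)

/-- Action of a step at `lp j 2` (read of the neighbour's `Write`). -/
lemma step_lp2 {c c' : Config Net Val} {p : Net.Proc} {a : Act Net.Proc Val}
    (h : Step Net Val c p a c') {j : Fin (Net.deg p)} (hpc : c.pc p = PC.lp j 2) :
    c'.pc p = PC.lp j 3 ∧ c'.bv p = c.bv p ∧ (∀ x, c'.regCC p x = c.regCC p x) := by
  cases h with
  | readNbrW i hpc' =>
    rw [hpc] at hpc'; simp only [PC.lp.injEq] at hpc'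
    obtain ⟨rfl, -⟩ : j = i ∧ _ := ⟨hpc'.1, trivial⟩
    exact ⟨by simp, by simp, fun x => rfl⟩
  | writeW i v hpc' => rw [hpc] at hpc'; exact absurd hpc' (by simp)
  | readOwnC i hpc' => rw [hpc] at hpc'; exact absurd hpc' (by simp)
  | writeOwnC i hpc' => rw [hpc] at hpc'; exact absurd hpc' (by simp)
  | readNbrC i hpc' => rw [hpc] at hpc'; exact absurd hpc' (by simp)
  | readOwnCC i hpc' => rw [hpc] at hpc'; exact absurd hpc' (by simp)
  | writeOwnCC i hpc' => rw [hpc] at hpc'; exact absurd hpc' (by simp)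
  | readOwnC' i hpc' => rw [hpc] at hpc'; exact absurd hpc' (by simp)
  | readNbrCC i hpc' => rw [hpc] at hpc'; exact absurd hpc' (by simp)

/-- Action of a step at `lp j 3` (write of own `CheckControl`). -/
lemma step_lp3 {c c' : Config Net Val} {p : Net.Proc} {a : Act Net.Proc Val}
    (h : Step Net Val c p a c') {j : Fin (Net.deg p)} (hpc : c.pc p = PC.lp j 3) :
    c'.pc p = PC.lp j 4 ∧ c'.regCC p (Net.nbr p j) = c.bv p j := by
  cases h with
  | writeOwnCC i hpc' =>
    rw [hpc] at hpc'; simp only [PC.lp.injEq] at hpc'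
    obtain ⟨rfl, -⟩ : j = i ∧ _ := ⟨hpc'.1, trivial⟩
    refine ⟨by simp, ?_⟩
    simp [upd2]
  | writeW i v hpc' => rw [hpc] at hpc'; exact absurd hpc' (by simp)
  | readOwnC i hpc' => rw [hpc] at hpc'; exact absurd hpc' (by simp)
  | writeOwnC i hpc' => rw [hpc] at hpc'; exact absurd hpc' (by simp)
  | readNbrC i hpc' => rw [hpc] at hpc'; exact absurd hpc' (by simp)
  | readOwnCC i hpc' => rw [hpc] at hpc'; exact absurd hpc' (by simp)
  | readNbrW i hpc' => rw [hpc] at hpc'; exact absurd hpc' (by simp)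
  | readOwnC' i hpc' => rw [hpc] at hpc'; exact absurd hpc' (by simp)
  | readNbrCC i hpc' => rw [hpc] at hpc'; exact absurd hpc' (by simp)

lemma Qstep {c c' : Config Net Val} {p : Net.Proc} {a : Act Net.Proc Val}
    (h : Step Net Val c p a c') (A B : Net.Proc) (j : Fin (Net.deg B))
    (hj : Net.nbr B j = A) (v : Bool) (hreg : c.regC A B = v)
    (hQ1 : c.regCC B A = v)
    (hQ2 : (c.pc B = PC.lp j 1 ∨ c.pc B = PC.lp j 2 ∨ c.pc B = PC.lp j 3) →
      c.bv B j = v) :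
    c'.regCC B A = v ∧
    ((c'.pc B = PC.lp j 1 ∨ c'.pc B = PC.lp j 2 ∨ c'.pc B = PC.lp j 3) →
      c'.bv B j = v) := by
  by_cases hpB : p = B
  · subst hpB
    cases h with
    | writeW i w hpc =>
      exact ⟨hQ1, by intro hc; simp [Function.update_self] at hc⟩
    | readOwnC i hpc =>
      exact ⟨hQ1, by intro hc; simp [Function.update_self] at hc⟩
    | writeOwnC i hpc =>
      refine ⟨hQ1, ?_⟩
      intro hc
      by_cases hs : i.1 + 1 < Net.deg p <;>
        simp [Function.update_self, finSucc?, hs] at hc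
    | readNbrC i hpc =>
      refine ⟨hQ1, ?_⟩
      intro hc
      by_cases hij : i = j
      · show Function.update c.bv p
          (Function.update (c.bv p) i (c.regC (Net.nbr p i) p)) p j = v
        rw [Function.update_self, ← hij, Function.update_self, hij, hj]
        exact hreg
      · exfalso
        simp only [Function.update_self] at hc
        simp at hc
        exact hij hc
    | readOwnCC i hpc =>
      refine ⟨hQ1, ?_⟩
      intro hc
      exfalso
      by_cases hij : i = j
      · have hb : c.bv p i = v := by
          rw [hij]; exact hQ2 (Or.inl (by rw [← hij]; exact hpc))
        have hcc : c.regCC p (Net.nbr p i) = v := by rw [hij, hj]; exact hQ1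
        have hcond : ¬ (c.bv p i ≠ c.regCC p (Net.nbr p i)) := by
          rw [hb, hcc]; simp
        simp only [Function.update_self, if_neg hcond] at hc
        simp at hc
      · by_cases hcond : c.bv p i ≠ c.regCC p (Net.nbr p i)
        · simp only [Function.update_self, if_pos hcond] at hc
          simp at hc
          exact hij hc
        · simp only [Function.update_self, if_neg hcond] at hc
          simp at hc
    | readNbrW i hpc =>
      refine ⟨hQ1, ?_⟩
      intro hc
      by_cases hij : i = j
      · exact hQ2 (Or.inr (Or.inl (by rw [hij] at hpc; exact hpc)))
      · exfalso
        simp only [Function.update_self] at hc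
        simp at hc
        exact hij hc
    | writeOwnCC i hpc =>
      constructor
      · by_cases hij : i = j
        · have hb : c.bv p j = v :=
            hQ2 (Or.inr (Or.inr (by rw [← hij]; exact hpc)))
          show upd2 c.regCC p (Net.nbr p i) (c.bv p i) p A = v
          rw [hij, hj]
          simp [upd2, hb]
        · have hne : A ≠ Net.nbr p i := by
            intro hh
            exact hij (Net.nbr_inj p (by rw [← hh, hj]))
          show upd2 c.regCC p (Net.nbr p i) (c.bv p i) p A = v
          simp [upd2, hne, hQ1]
      · intro hc
        exfalso
        simp only [Function.update_self] at hc
        simp at hc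
    | readOwnC' i hpc =>
      refine ⟨hQ1, ?_⟩
      intro hc
      exfalso
      simp only [Function.update_self] at hc
      simp at hc
    | readNbrCC i hpc =>
      refine ⟨hQ1, ?_⟩
      intro hc
      exfalso
      by_cases hs : i.1 + 1 < Net.deg p
      · simp [Function.update_self, finSucc?, hs] at hc
      · by_cases hall : ∀ jj, c.cv p jj =
            Function.update (c.lv p) i (c.regCC (Net.nbr p i) p) jj <;>
          simp [Function.update_self, finSucc?, hs, hall] at hc
  · have hfr := step_frame h B (fun hh => hpB hh.symm)
    refine ⟨(hfr.2.2.2.2.2.2.1 A).trans hQ1, ?_⟩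
    rw [hfr.1, hfr.2.1]
    exact hQ2

lemma lrank_eq_target {n : ℕ} (q : PC n) (j : Fin n)
    (h : lrank q = 3 * n + 6 * j.1) : q = PC.lp j 0 := by
  cases q with
  | wr i k => have := i.2; have := k.2; simp only [lrank] at h; omega
  | lp i k =>
    have hi := i.2; have hk := k.2
    simp only [lrank] at h
    have hi' : i.1 = j.1 := by omega
    have hk' : k.1 = 0 := by omega
    congr 1
    · exact Fin.ext hi'
    · exact Fin.ext (by simpa using hk')

lemma reach_top (e : Exec Net Val) (hfair : e.Fair) (p : Net.Proc) (u : ℕ) :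
    ∃ w, u ≤ w ∧ e.sched w = p ∧
      (e.cfg w).pc p =
        PC.lp ⟨Net.deg p - 1, by have := Net.deg_pos p; omega⟩ 5 := by
  refine pcReach e hfair p 0 (fun _ => True)
    (fun q => q = PC.lp ⟨Net.deg p - 1, by have := Net.deg_pos p; omega⟩ 5)
    (fun q => 9 * Net.deg p - lrank q) ?_ u (Nat.zero_le u) trivial
  intro u' _ hs _ hG
  have h1 := lrank_lt ((e.cfg u').pc p)
  have h2 : lrank ((e.cfg u').pc p) + 1 ≠ 9 * Net.deg p := by
    intro hh
    obtain ⟨hn, hq⟩ := lrank_eq_max _ hh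
    exact hG hq
  have hst := e.step u'
  rw [hs] at hst
  obtain ⟨h3, h4⟩ := step_rank hst (by omega)
  refine ⟨trivial, ?_⟩
  show 9 * Net.deg p - lrank ((e.cfg (u' + 1)).pc p) <
    9 * Net.deg p - lrank ((e.cfg u').pc p)
  omega

lemma reach_lp0 (e : Exec Net Val) (hfair : e.Fair) (p : Net.Proc)
    (j : Fin (Net.deg p)) (u : ℕ)
    (hu : lrank ((e.cfg u).pc p) ≤ 3 * Net.deg p + 6 * j.1) :
    ∃ w, u ≤ w ∧ e.sched w = p ∧ (e.cfg w).pc p = PC.lp j 0 := by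
  refine pcReach e hfair p 0 (fun q => lrank q ≤ 3 * Net.deg p + 6 * j.1)
    (fun q => q = PC.lp j 0)
    (fun q => 3 * Net.deg p + 6 * j.1 - lrank q) ?_ u (Nat.zero_le u) hu
  intro u' _ hs hI hG
  have h2 : lrank ((e.cfg u').pc p) ≠ 3 * Net.deg p + 6 * j.1 := by
    intro hh
    exact hG (lrank_eq_target _ j hh)
  have hst := e.step u'
  rw [hs] at hst
  obtain ⟨h3, h4⟩ := step_rank_target hst j.1 j.2 (by omega)
  refine ⟨h4, ?_⟩
  show 3 * Net.deg p + 6 * j.1 - lrank ((e.cfg (u' + 1)).pc p) <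
    3 * Net.deg p + 6 * j.1 - lrank ((e.cfg u').pc p)
  omega

lemma step_at_top_rank {c c' : Config Net Val} {p : Net.Proc} {a : Act Net.Proc Val}
    (h : Step Net Val c p a c')
    (hpc : c.pc p = PC.lp ⟨Net.deg p - 1, by have := Net.deg_pos p; omega⟩ 5) :
    lrank (c'.pc p) ≤ 3 * Net.deg p := by
  cases h with
  | readNbrCC i hpc' =>
    rw [hpc] at hpc'
    simp only [PC.lp.injEq] at hpc'
    have hi : i.1 = Net.deg p - 1 := by
      rcases hpc' with ⟨h1, -⟩
      exact (congrArg Fin.val h1).symm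
    have hs : ¬ (i.1 + 1 < Net.deg p) := by have := Net.deg_pos p; omega
    simp only [Function.update_self, finSucc?, hs, dif_neg, not_false_iff]
    split <;> simp only [lrank] <;> omega
  | writeW i v hpc' => rw [hpc] at hpc'; exact absurd hpc' (by simp)
  | readOwnC i hpc' => rw [hpc] at hpc'; exact absurd hpc' (by simp)
  | writeOwnC i hpc' => rw [hpc] at hpc'; exact absurd hpc' (by simp)
  | readNbrC i hpc' => rw [hpc] at hpc'; exact absurd hpc' (by simp)
  | readOwnCC i hpc' => rw [hpc] at hpc'; exact absurd hpc' (by simp)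
  | readNbrW i hpc' => rw [hpc] at hpc'; exact absurd hpc' (by simp)
  | writeOwnCC i hpc' => rw [hpc] at hpc'; exact absurd hpc' (by simp)
  | readOwnC' i hpc' => rw [hpc] at hpc'; exact absurd hpc' (by simp)

/-- Key stabilization lemma: while `A` stays in the loop, the `CheckControl`
register of each neighbour `B` of `A` towards `A` eventually equals the frozen
value of `Control_{AB}`, forever. -/
lemma stabilize (e : Exec Net Val) (hfair : e.Fair) (A : Net.Proc) (t : ℕ)
    (hcon : ∀ u, t ≤ u → InLoop (e.cfg u) A) (i : Fin (Net.deg A)) :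
    ∃ T, t ≤ T ∧ ∀ u, T ≤ u →
      (e.cfg u).regCC (Net.nbr A i) A = (e.cfg t).regC A (Net.nbr A i) := by
  set B := Net.nbr A i with hB
  obtain ⟨j, hj⟩ := Net.nbr_symm A i
  set v := (e.cfg t).regC A B with hv
  have hreg : ∀ u, t ≤ u → (e.cfg u).regC A B = v := fun u hu =>
    regC_const e A t hcon u hu B
  have hQstep : ∀ u, t ≤ u → ((e.cfg (u)).regCC B A = v ∧ (((e.cfg (u)).pc B = PC.lp j 1 ∨ (e.cfg (u)).pc B = PC.lp j 2 ∨ (e.cfg (u)).pc B = PC.lp j 3) → (e.cfg (u)).bv B j = v)) → ((e.cfg (u + 1)).regCC B A = v ∧ (((e.cfg (u + 1)).pc B = PC.lp j 1 ∨ (e.cfg (u + 1)).pc B = PC.lp j 2 ∨ (e.cfg (u + 1)).pc B = PC.lp j 3) → (e.cfg (u + 1)).bv B j = v)) := by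
    intro u hu hq
    exact Qstep (e.step u) A B j hj v (hreg u hu) hq.1 hq.2
  suffices hT : ∃ T, t ≤ T ∧ ((e.cfg (T)).regCC B A = v ∧ (((e.cfg (T)).pc B = PC.lp j 1 ∨ (e.cfg (T)).pc B = PC.lp j 2 ∨ (e.cfg (T)).pc B = PC.lp j 3) → (e.cfg (T)).bv B j = v)) by
    obtain ⟨T, hT1, hT2⟩ := hT
    have hQall : ∀ d, ((e.cfg (T + d)).regCC B A = v ∧ (((e.cfg (T + d)).pc B = PC.lp j 1 ∨ (e.cfg (T + d)).pc B = PC.lp j 2 ∨ (e.cfg (T + d)).pc B = PC.lp j 3) → (e.cfg (T + d)).bv B j = v)) := by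
      intro d
      induction d with
      | zero => exact hT2
      | succ d ih =>
        exact hQstep (T + d) (by omega) ih
    refine ⟨T, hT1, fun u hu => ?_⟩
    have : u = T + (u - T) := by omega
    rw [this]
    exact (hQall (u - T)).1
  -- reach the top of `B`'s program, then `lp j 0`
  obtain ⟨w, hw1, hw2, hw3⟩ := reach_top e hfair B t
  have hstw := e.step w
  rw [hw2] at hstw
  have hr1 : lrank ((e.cfg (w + 1)).pc B) ≤ 3 * Net.deg B :=
    step_at_top_rank hstw hw3
  obtain ⟨w0, hw01, hw02, hw03⟩ := reach_lp0 e hfair B j (w + 1) (by omega)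
  have htw0 : t ≤ w0 := by omega
  have hst0 := e.step w0
  rw [hw02] at hst0
  obtain ⟨hp1, hp2, hp3⟩ := step_lp0 hst0 hw03
  have hbv1 : (e.cfg (w0 + 1)).bv B j = v := by
    rw [hp2, hj]; exact hreg w0 htw0
  -- next time `B` is scheduled
  obtain ⟨w1, h11, h12, h13⟩ := nextP e hfair B (w0 + 1)
  obtain ⟨f1, f2, -, -, -, -⟩ := interval_frame e B h11 h13
  have hpc1 : (e.cfg w1).pc B = PC.lp j 1 := by rw [f1, hp1]
  have hbvw1 : (e.cfg w1).bv B j = v := by rw [f2]; exact hbv1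
  have hst1 := e.step w1
  rw [h12] at hst1
  obtain ⟨hq1, hq2, hq3⟩ := step_lp1 hst1 hpc1
  by_cases hcc : (e.cfg w1).regCC B A = v
  · have hcond : ¬ ((e.cfg w1).bv B j ≠ (e.cfg w1).regCC B (Net.nbr B j)) := by
      rw [hbvw1, hj, hcc]; simp
    rw [if_neg hcond] at hq1
    refine ⟨w1 + 1, by omega, ?_, ?_⟩
    · rw [hq3 A]; exact hcc
    · intro hc
      rw [hq1] at hc
      simp at hc
  · have hcond : (e.cfg w1).bv B j ≠ (e.cfg w1).regCC B (Net.nbr B j) := by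
      rw [hbvw1, hj]
      exact fun hh => hcc hh.symm
    rw [if_pos hcond] at hq1
    have hbv2 : (e.cfg (w1 + 1)).bv B j = v := by rw [hq2]; exact hbvw1
    obtain ⟨w2, h21, h22, h23⟩ := nextP e hfair B (w1 + 1)
    obtain ⟨g1, g2, -, -, -, -⟩ := interval_frame e B h21 h23
    have hpc2 : (e.cfg w2).pc B = PC.lp j 2 := by rw [g1, hq1]
    have hbvw2 : (e.cfg w2).bv B j = v := by rw [g2]; exact hbv2
    have hst2 := e.step w2
    rw [h22] at hst2
    obtain ⟨hr1', hr2', -⟩ := step_lp2 hst2 hpc2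
    have hbv3 : (e.cfg (w2 + 1)).bv B j = v := by rw [hr2']; exact hbvw2
    obtain ⟨w3, h31, h32, h33⟩ := nextP e hfair B (w2 + 1)
    obtain ⟨k1, k2, -, -, -, -⟩ := interval_frame e B h31 h33
    have hpc3 : (e.cfg w3).pc B = PC.lp j 3 := by rw [k1, hr1']
    have hbvw3 : (e.cfg w3).bv B j = v := by rw [k2]; exact hbv3
    have hst3 := e.step w3
    rw [h32] at hst3
    obtain ⟨hs1, hs2⟩ := step_lp3 hst3 hpc3
    refine ⟨w3 + 1, by omega, ?_, ?_⟩
    · rw [← hj, hs2]; exact hbvw3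
    · intro hc
      rw [hs1] at hc
      simp at hc

/-- Preservation of the progress invariant for `A` inside one pass of the
repeat loop: every position already passed has read the correct (frozen)
values into `c_i` and `l_i`. -/
lemma Kstep {c c' : Config Net Val} {A : Net.Proc} {a : Act Net.Proc Val}
    (h : Step Net Val c A a c') (v : Fin (Net.deg A) → Bool)
    (hv : ∀ jj, c.regC A (Net.nbr A jj) = v jj)
    (hstab : ∀ jj, c.regCC (Net.nbr A jj) A = v jj)
    (hloop' : InLoop c' A)
    (hK : ∃ i k, c.pc A = PC.lp i k ∧
      (∀ jj : Fin (Net.deg A), 6 * jj.1 + 5 ≤ 6 * i.1 + k.1 → c.cv A jj = v jj) ∧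
      (∀ jj : Fin (Net.deg A), 6 * jj.1 + 6 ≤ 6 * i.1 + k.1 → c.lv A jj = v jj)) :
    ∃ i k, c'.pc A = PC.lp i k ∧
      (∀ jj : Fin (Net.deg A), 6 * jj.1 + 5 ≤ 6 * i.1 + k.1 → c'.cv A jj = v jj) ∧
      (∀ jj : Fin (Net.deg A), 6 * jj.1 + 6 ≤ 6 * i.1 + k.1 → c'.lv A jj = v jj) := by
  obtain ⟨i, k, hpc, hcv, hlv⟩ := hK
  cases h with
  | writeW i' w hpc' => rw [hpc'] at hpc; exact absurd hpc (by simp)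
  | readOwnC i' hpc' => rw [hpc'] at hpc; exact absurd hpc (by simp)
  | writeOwnC i' hpc' => rw [hpc'] at hpc; exact absurd hpc (by simp)
  | readNbrC i' hpc' =>
    obtain ⟨h1, h2⟩ : i = i' ∧ k = 0 := by
      have hE := hpc.symm.trans hpc'
      simpa using hE
    subst h1
    have hk : k.1 = 0 := by simpa using congrArg Fin.val h2
    refine ⟨i, 1, by simp, ?_, ?_⟩
    · intro jj hjj
      have hv1 : ((1 : Fin 6) : ℕ) = 1 := rfl
      exact hcv jj (by omega)
    · intro jj hjj
      have hv1 : ((1 : Fin 6) : ℕ) = 1 := rfl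
      exact hlv jj (by omega)
  | readOwnCC i' hpc' =>
    obtain ⟨h1, h2⟩ : i = i' ∧ k = 1 := by
      have hE := hpc.symm.trans hpc'
      simpa using hE
    subst h1
    have hk : k.1 = 1 := by simpa using congrArg Fin.val h2
    by_cases hcond : c.bv A i ≠ c.regCC A (Net.nbr A i)
    · refine ⟨i, 2, by simp [if_pos hcond], ?_, ?_⟩
      · intro jj hjj
        have hv2 : ((2 : Fin 6) : ℕ) = 2 := rfl
        exact hcv jj (by omega)
      · intro jj hjj
        have hv2 : ((2 : Fin 6) : ℕ) = 2 := rfl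
        exact hlv jj (by omega)
    · refine ⟨i, 4, by simp [if_neg hcond], ?_, ?_⟩
      · intro jj hjj
        have hv4 : ((4 : Fin 6) : ℕ) = 4 := rfl
        exact hcv jj (by omega)
      · intro jj hjj
        have hv4 : ((4 : Fin 6) : ℕ) = 4 := rfl
        exact hlv jj (by omega)
  | readNbrW i' hpc' =>
    obtain ⟨h1, h2⟩ : i = i' ∧ k = 2 := by
      have hE := hpc.symm.trans hpc'
      simpa using hE
    subst h1
    have hk : k.1 = 2 := by simpa using congrArg Fin.val h2
    refine ⟨i, 3, by simp, ?_, ?_⟩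
    · intro jj hjj
      have hv3 : ((3 : Fin 6) : ℕ) = 3 := rfl
      exact hcv jj (by omega)
    · intro jj hjj
      have hv3 : ((3 : Fin 6) : ℕ) = 3 := rfl
      exact hlv jj (by omega)
  | writeOwnCC i' hpc' =>
    obtain ⟨h1, h2⟩ : i = i' ∧ k = 3 := by
      have hE := hpc.symm.trans hpc'
      simpa using hE
    subst h1
    have hk : k.1 = 3 := by simpa using congrArg Fin.val h2
    refine ⟨i, 4, by simp, ?_, ?_⟩
    · intro jj hjj
      have hv4 : ((4 : Fin 6) : ℕ) = 4 := rfl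
      exact hcv jj (by omega)
    · intro jj hjj
      have hv4 : ((4 : Fin 6) : ℕ) = 4 := rfl
      exact hlv jj (by omega)
  | readOwnC' i' hpc' =>
    obtain ⟨h1, h2⟩ : i = i' ∧ k = 4 := by
      have hE := hpc.symm.trans hpc'
      simpa using hE
    subst h1
    have hk : k.1 = 4 := by simpa using congrArg Fin.val h2
    refine ⟨i, 5, by simp, ?_, ?_⟩
    · intro jj hjj
      show Function.update c.cv A
        (Function.update (c.cv A) i (c.regC A (Net.nbr A i))) A jj = v jj
      rw [Function.update_self]
      by_cases hij : jj = i
      · subst hij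
        rw [Function.update_self]
        exact hv jj
      · rw [Function.update_of_ne hij]
        have hne : jj.1 ≠ i.1 := fun hh => hij (Fin.ext hh)
        have hv5 : ((5 : Fin 6) : ℕ) = 5 := rfl
        exact hcv jj (by omega)
    · intro jj hjj
      have hv5 : ((5 : Fin 6) : ℕ) = 5 := rfl
      exact hlv jj (by omega)
  | readNbrCC i' hpc' =>
    obtain ⟨h1, h2⟩ : i = i' ∧ k = 5 := by
      have hE := hpc.symm.trans hpc'
      simpa using hE
    subst h1
    have hk : k.1 = 5 := by simpa using congrArg Fin.val h2
    by_cases hs : i.1 + 1 < Net.deg A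
    · refine ⟨⟨i.1 + 1, hs⟩, 0, by simp [finSucc?, hs], ?_, ?_⟩
      · intro jj hjj
        have hm : ((⟨i.1 + 1, hs⟩ : Fin (Net.deg A)) : ℕ) = i.1 + 1 := rfl
        have hv0 : ((0 : Fin 6) : ℕ) = 0 := rfl
        exact hcv jj (by omega)
      · intro jj hjj
        have hm : ((⟨i.1 + 1, hs⟩ : Fin (Net.deg A)) : ℕ) = i.1 + 1 := rfl
        have hv0 : ((0 : Fin 6) : ℕ) = 0 := rfl
        show Function.update c.lv A
          (Function.update (c.lv A) i (c.regCC (Net.nbr A i) A)) A jj = v jj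
        rw [Function.update_self]
        by_cases hij : jj = i
        · subst hij
          rw [Function.update_self]
          exact hstab jj
        · rw [Function.update_of_ne hij]
          have hne : jj.1 ≠ i.1 := fun hh => hij (Fin.ext hh)
          exact hlv jj (by omega)
    · by_cases hall : ∀ jj, c.cv A jj =
          Function.update (c.lv A) i (c.regCC (Net.nbr A i) A) jj
      · exfalso
        obtain ⟨i2, k2, hpc2⟩ := hloop'
        simp [finSucc?, hs, hall] at hpc2
      · refine ⟨⟨0, Net.deg_pos A⟩, 0, by simp [finSucc?, hs, hall], ?_, ?_⟩
        · intro jj hjj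
          exfalso
          have hm : ((⟨0, Net.deg_pos A⟩ : Fin (Net.deg A)) : ℕ) = 0 := rfl
          have hv0 : ((0 : Fin 6) : ℕ) = 0 := rfl
          omega
        · intro jj hjj
          exfalso
          have hm : ((⟨0, Net.deg_pos A⟩ : Fin (Net.deg A)) : ℕ) = 0 := rfl
          have hv0 : ((0 : Fin 6) : ℕ) = 0 := rfl
          omega

/-- A step of `A` at the top of the loop that stays in the loop restarts
the loop at `lp 0 0`. -/
lemma step_restart {c c' : Config Net Val} {A : Net.Proc} {a : Act Net.Proc Val}
    (h : Step Net Val c A a c')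
    (hpc : c.pc A = PC.lp ⟨Net.deg A - 1, by have := Net.deg_pos A; omega⟩ 5)
    (hloop' : InLoop c' A) :
    c'.pc A = PC.lp ⟨0, Net.deg_pos A⟩ 0 := by
  cases h with
  | readNbrCC i hpc' =>
    have hi : i.1 = Net.deg A - 1 := by
      have hE := hpc.symm.trans hpc'
      simp only [PC.lp.injEq] at hE
      exact (congrArg Fin.val hE.1).symm
    have hs : ¬ (i.1 + 1 < Net.deg A) := by have := Net.deg_pos A; omega
    by_cases hall : ∀ jj, c.cv A jj =
        Function.update (c.lv A) i (c.regCC (Net.nbr A i) A) jj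
    · exfalso
      obtain ⟨i2, k2, hpc2⟩ := hloop'
      simp [finSucc?, hs, hall] at hpc2
    · simp [finSucc?, hs, hall]
  | writeW i v hpc' => rw [hpc'] at hpc; exact absurd hpc.symm (by simp)
  | readOwnC i hpc' => rw [hpc'] at hpc; exact absurd hpc.symm (by simp)
  | writeOwnC i hpc' => rw [hpc'] at hpc; exact absurd hpc.symm (by simp)
  | readNbrC i hpc' => rw [hpc'] at hpc; exact absurd hpc.symm (by simp)
  | readOwnCC i hpc' => rw [hpc'] at hpc; exact absurd hpc.symm (by simp)
  | readNbrW i hpc' => rw [hpc'] at hpc; exact absurd hpc.symm (by simp)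
  | writeOwnCC i hpc' => rw [hpc'] at hpc; exact absurd hpc.symm (by simp)
  | readOwnC' i hpc' => rw [hpc'] at hpc; exact absurd hpc.symm (by simp)

/-- A step of `A` at the top of the loop with all local copies correct
exits the loop. -/
lemma final_step {c c' : Config Net Val} {A : Net.Proc} {a : Act Net.Proc Val}
    (h : Step Net Val c A a c') (v : Fin (Net.deg A) → Bool)
    (hpc : c.pc A = PC.lp ⟨Net.deg A - 1, by have := Net.deg_pos A; omega⟩ 5)
    (hcv : ∀ jj, c.cv A jj = v jj)
    (hlv : ∀ jj : Fin (Net.deg A), jj.1 < Net.deg A - 1 → c.lv A jj = v jj)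
    (hstab : ∀ jj, c.regCC (Net.nbr A jj) A = v jj) :
    c'.pc A = PC.wr ⟨0, Net.deg_pos A⟩ 0 := by
  cases h with
  | readNbrCC i hpc' =>
    have hi : i.1 = Net.deg A - 1 := by
      have hE := hpc.symm.trans hpc'
      simp only [PC.lp.injEq] at hE
      exact (congrArg Fin.val hE.1).symm
    have hs : ¬ (i.1 + 1 < Net.deg A) := by have := Net.deg_pos A; omega
    have hall : ∀ jj, c.cv A jj =
        Function.update (c.lv A) i (c.regCC (Net.nbr A i) A) jj := by
      intro jj
      by_cases hij : jj = i
      · subst hij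
        rw [Function.update_self, hstab jj, hcv jj]
      · rw [Function.update_of_ne hij]
        have hne : jj.1 ≠ i.1 := fun hh => hij (Fin.ext hh)
        have := jj.2
        rw [hcv jj, hlv jj (by omega)]
    simp [finSucc?, hs, hall]
  | writeW i w hpc' => rw [hpc'] at hpc; exact absurd hpc.symm (by simp)
  | readOwnC i hpc' => rw [hpc'] at hpc; exact absurd hpc.symm (by simp)
  | writeOwnC i hpc' => rw [hpc'] at hpc; exact absurd hpc.symm (by simp)
  | readNbrC i hpc' => rw [hpc'] at hpc; exact absurd hpc.symm (by simp)
  | readOwnCC i hpc' => rw [hpc'] at hpc; exact absurd hpc.symm (by simp)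
  | readNbrW i hpc' => rw [hpc'] at hpc; exact absurd hpc.symm (by simp)
  | writeOwnCC i hpc' => rw [hpc'] at hpc; exact absurd hpc.symm (by simp)
  | readOwnC' i hpc' => rw [hpc'] at hpc; exact absurd hpc.symm (by simp)

end QRAux

open QR QRAux in
/-- Let `A` be a process executing the quasi rendezvous protocol.
Whatever the (fair) execution, from any instant the system reaches a configuration
in which the program counter of `A` is no longer within the repeat loop; in
particular no process stays in the repeat loop forever. -/
theorem quasi_rendezvous_exits_loop (Net : Network) (Val : Type)
    (e : Exec Net Val) (hfair : e.Fair) (A : Net.Proc) (t : ℕ) :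
    ∃ u, t ≤ u ∧ ¬ InLoop (e.cfg u) A := by
  classical
  by_contra hcontra
  push_neg at hcontra
  have hcon : ∀ u, t ≤ u → InLoop (e.cfg u) A := hcontra
  have hnpos := Net.deg_pos A
  set v : Fin (Net.deg A) → Bool :=
    fun jj => (e.cfg t).regC A (Net.nbr A jj) with hvdef
  have hv : ∀ u, t ≤ u → ∀ jj, (e.cfg u).regC A (Net.nbr A jj) = v jj :=
    fun u hu jj => regC_const e A t hcon u hu _
  choose T hT1 hT2 using fun i => stabilize e hfair A t hcon i
  set TT := max t (Finset.univ.sup T) with hTT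
  have hTTi : ∀ i, T i ≤ TT := fun i =>
    le_max_of_le_right (Finset.le_sup (Finset.mem_univ i))
  have htTT : t ≤ TT := le_max_left _ _
  obtain ⟨w1, hw11, hw12, hw13⟩ := reach_top e hfair A TT
  have hst1 := e.step w1
  rw [hw12] at hst1
  have hrestart : (e.cfg (w1 + 1)).pc A = PC.lp ⟨0, hnpos⟩ 0 :=
    step_restart hst1 hw13 (hcon (w1 + 1) (by omega))
  -- the progress invariant, from time `w1 + 1` on
  have hK : ∀ d, (∃ i k, (e.cfg (w1 + 1 + d)).pc A = PC.lp i k ∧ (∀ jj : Fin (Net.deg A), 6 * jj.1 + 5 ≤ 6 * i.1 + k.1 → (e.cfg (w1 + 1 + d)).cv A jj = v jj) ∧ (∀ jj : Fin (Net.deg A), 6 * jj.1 + 6 ≤ 6 * i.1 + k.1 → (e.cfg (w1 + 1 + d)).lv A jj = v jj)) := by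
    intro d
    induction d with
    | zero =>
      refine ⟨⟨0, hnpos⟩, 0, hrestart, ?_, ?_⟩
      · intro jj hjj
        exfalso
        have hm : ((⟨0, hnpos⟩ : Fin (Net.deg A)) : ℕ) = 0 := rfl
        have hv0 : ((0 : Fin 6) : ℕ) = 0 := rfl
        omega
      · intro jj hjj
        exfalso
        have hm : ((⟨0, hnpos⟩ : Fin (Net.deg A)) : ℕ) = 0 := rfl
        have hv0 : ((0 : Fin 6) : ℕ) = 0 := rfl
        omega
    | succ d ih =>
      have hu : t ≤ w1 + 1 + d := by omega
      by_cases hA : e.sched (w1 + 1 + d) = A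
      · have hst := e.step (w1 + 1 + d)
        rw [hA] at hst
        exact Kstep hst v (hv _ hu) (fun jj => hT2 jj _ (by have := hTTi jj; omega))
          (hcon _ (by omega)) ih
      · obtain ⟨f1, f2, f3, f4, -, -, -, -⟩ :=
          step_frame (e.step (w1 + 1 + d)) A (fun hh => hA hh.symm)
        obtain ⟨i, k, h1, h2, h3⟩ := ih
        refine ⟨i, k, f1.trans h1, fun jj hjj => ?_, fun jj hjj => ?_⟩
        · have := h2 jj hjj
          rw [← f3] at this
          exact this
        · have := h3 jj hjj
          rw [← f4] at this
          exact this
  obtain ⟨w2, hw21, hw22, hw23⟩ := reach_top e hfair A (w1 + 1)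
  have hKw2 : (∃ i k, (e.cfg (w2)).pc A = PC.lp i k ∧ (∀ jj : Fin (Net.deg A), 6 * jj.1 + 5 ≤ 6 * i.1 + k.1 → (e.cfg (w2)).cv A jj = v jj) ∧ (∀ jj : Fin (Net.deg A), 6 * jj.1 + 6 ≤ 6 * i.1 + k.1 → (e.cfg (w2)).lv A jj = v jj)) := by
    have := hK (w2 - (w1 + 1))
    have heq : w1 + 1 + (w2 - (w1 + 1)) = w2 := by omega
    rwa [heq] at this
  obtain ⟨i2, k2, hpc2, hcv2, hlv2⟩ := hKw2
  have hE := hpc2.symm.trans hw23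
  simp only [PC.lp.injEq] at hE
  have hi2 : i2.1 = Net.deg A - 1 := congrArg Fin.val hE.1
  have hk2 : k2.1 = 5 := by simpa using congrArg Fin.val hE.2
  have hcvall : ∀ jj, (e.cfg w2).cv A jj = v jj := by
    intro jj
    have := jj.2
    exact hcv2 jj (by omega)
  have hlvall : ∀ jj : Fin (Net.deg A), jj.1 < Net.deg A - 1 →
      (e.cfg w2).lv A jj = v jj := by
    intro jj hjj
    exact hlv2 jj (by omega)
  have hst2 := e.step w2
  rw [hw22] at hst2
  have hfinal := final_step hst2 v hw23 hcvall hlvall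
    (fun jj => hT2 jj _ (by have := hTTi jj; omega))
  obtain ⟨i3, k3, hpc3⟩ := hcon (w2 + 1) (by omega)
  rw [hfinal] at hpc3
  exact PC.noConfusion rfl (heq_of_eq hpc3)
end

section
/- Let A be a process executing the quasi rendezvous protocol. Whatever the execution, A writes an infinite number of times into each of its Write registers Write_{AB_i}, for every neighbour B_i of A. -/
namespace QRproof
open QR Classical

variable {Net : Network} {Val : Type}

lemma enabled_all (c : Config Net Val) (p : Net.Proc) : Enabled c p := by
  rcases hpc : c.pc p with ⟨i, k⟩ | ⟨i, k⟩
  · fin_cases k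
    · exact ⟨_, _, Step.writeW c p i (c.regW p p) hpc⟩
    · exact ⟨_, _, Step.readOwnC c p i hpc⟩
    · exact ⟨_, _, Step.writeOwnC c p i hpc⟩
  · fin_cases k
    · exact ⟨_, _, Step.readNbrC c p i hpc⟩
    · exact ⟨_, _, Step.readOwnCC c p i hpc⟩
    · exact ⟨_, _, Step.readNbrW c p i hpc⟩
    · exact ⟨_, _, Step.writeOwnCC c p i hpc⟩
    · exact ⟨_, _, Step.readOwnC' c p i hpc⟩
    · exact ⟨_, _, Step.readNbrCC c p i hpc⟩

lemma exists_sched (e : Exec Net Val) (hf : e.Fair) (p : Net.Proc) (t : ℕ) :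
    ∃ u, t ≤ u ∧ e.sched u = p := hf p t (fun u _ => enabled_all _ _)

lemma exists_next (e : Exec Net Val) (hf : e.Fair) (p : Net.Proc) (t : ℕ) :
    ∃ u, t ≤ u ∧ e.sched u = p ∧ ∀ v, t ≤ v → v < u → e.sched v ≠ p := by
  classical
  have h : ∃ u, t ≤ u ∧ e.sched u = p := exists_sched e hf p t
  refine ⟨Nat.find h, (Nat.find_spec h).1, (Nat.find_spec h).2, fun v hv1 hv2 hv3 => ?_⟩
  exact Nat.find_min h hv2 ⟨hv1, hv3⟩

lemma step_frame {c c' : Config Net Val} {q : Net.Proc} {a : Act Net.Proc Val}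
    (h : Step Net Val c q a c') (p : Net.Proc) (hpq : p ≠ q) :
    c'.pc p = c.pc p ∧ c'.bv p = c.bv p ∧ c'.cv p = c.cv p ∧ c'.lv p = c.lv p := by
  cases h <;> simp [Function.update, hpq]

section Inv
variable {c c' : Config Net Val} {p q : Net.Proc} {a : Act Net.Proc Val}

lemma inv_wr0 (h : Step Net Val c p a c') {i} (hpc : c.pc p = .wr i 0) :
    (∃ v, a = .writeW p (Net.nbr p i) v) ∧ c'.pc p = .wr i 1 := by
  cases h <;> simp_all [Function.update]

lemma inv_wr1 (h : Step Net Val c p a c') {i} (hpc : c.pc p = .wr i 1) :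
    c'.pc p = .wr i 2 := by
  cases h <;> simp_all [Function.update]

lemma inv_wr2 (h : Step Net Val c p a c') {i} (hpc : c.pc p = .wr i 2) :
    c'.pc p = (match finSucc? i with
               | some j => PC.wr j 0
               | none => PC.lp ⟨0, Net.deg_pos p⟩ 0) := by
  cases h <;> simp_all [Function.update]

lemma inv_lp0 (h : Step Net Val c p a c') {i} (hpc : c.pc p = .lp i 0) :
    c'.pc p = .lp i 1 ∧ c'.cv p = c.cv p ∧ c'.lv p = c.lv p ∧
    c'.bv p = Function.update (c.bv p) i (c.regC (Net.nbr p i) p) ∧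
    c'.regC = c.regC ∧ c'.regCC = c.regCC := by
  cases h <;> simp_all [Function.update]

lemma inv_lp1 (h : Step Net Val c p a c') {i} (hpc : c.pc p = .lp i 1) :
    c'.pc p = (if c.bv p i ≠ c.regCC p (Net.nbr p i) then PC.lp i 2 else PC.lp i 4) ∧
    c'.cv p = c.cv p ∧ c'.lv p = c.lv p ∧ c'.bv p = c.bv p ∧
    c'.regC = c.regC ∧ c'.regCC = c.regCC := by
  cases h <;> simp_all [Function.update]

lemma inv_lp2 (h : Step Net Val c p a c') {i} (hpc : c.pc p = .lp i 2) :
    c'.pc p = .lp i 3 ∧ c'.cv p = c.cv p ∧ c'.lv p = c.lv p ∧ c'.bv p = c.bv p ∧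
    c'.regC = c.regC ∧ c'.regCC = c.regCC := by
  cases h <;> simp_all [Function.update]

lemma inv_lp3 (h : Step Net Val c p a c') {i} (hpc : c.pc p = .lp i 3) :
    c'.pc p = .lp i 4 ∧ c'.cv p = c.cv p ∧ c'.lv p = c.lv p ∧ c'.bv p = c.bv p ∧
    c'.regC = c.regC ∧ c'.regCC = upd2 c.regCC p (Net.nbr p i) (c.bv p i) := by
  cases h <;> simp_all [Function.update]

lemma inv_lp4 (h : Step Net Val c p a c') {i} (hpc : c.pc p = .lp i 4) :
    c'.pc p = .lp i 5 ∧
    c'.cv p = Function.update (c.cv p) i (c.regC p (Net.nbr p i)) ∧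
    c'.lv p = c.lv p ∧ c'.bv p = c.bv p ∧
    c'.regC = c.regC ∧ c'.regCC = c.regCC := by
  cases h <;> simp_all [Function.update]

lemma inv_lp5 (h : Step Net Val c p a c') {i} (hpc : c.pc p = .lp i 5) :
    c'.pc p = (match finSucc? i with
               | some j => PC.lp j 0
               | none =>
                 if ∀ j, c.cv p j = Function.update (c.lv p) i (c.regCC (Net.nbr p i) p) j
                 then PC.wr ⟨0, Net.deg_pos p⟩ 0
                 else PC.lp ⟨0, Net.deg_pos p⟩ 0) ∧
    c'.lv p = Function.update (c.lv p) i (c.regCC (Net.nbr p i) p) ∧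
    c'.cv p = c.cv p ∧ c'.bv p = c.bv p ∧
    c'.regC = c.regC ∧ c'.regCC = c.regCC := by
  cases h <;> simp_all [Function.update]

lemma regC_frame_ne (h : Step Net Val c q a c') (A : Net.Proc) (hq : q ≠ A) :
    c'.regC A = c.regC A := by
  have hq' : A ≠ q := Ne.symm hq
  cases h <;> funext y <;> simp_all [upd2]

lemma regC_frame_loop (h : Step Net Val c q a c') (hq : ∀ i, c.pc q ≠ .wr i 2) :
    c'.regC = c.regC := by
  cases h <;> simp_all

lemma regCC_frame_ne (h : Step Net Val c q a c') (B : Net.Proc) (hq : q ≠ B) :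
    c'.regCC B = c.regCC B := by
  have hq' : B ≠ q := Ne.symm hq
  cases h <;> funext y <;> simp_all [upd2]

lemma regCC_val (h : Step Net Val c q a c') (B A' : Net.Proc) :
    c'.regCC B A' = c.regCC B A' ∨
    (q = B ∧ ∃ i, Net.nbr B i = A' ∧ c.pc B = .lp i 3 ∧ c'.regCC B A' = c.bv B i) := by
  cases h
  case writeOwnCC i hpc =>
    by_cases hb : q = B ∧ Net.nbr q i = A'
    · obtain ⟨h1, h2⟩ := hb
      subst h1
      exact Or.inr ⟨rfl, i, h2, hpc, by simp [upd2, h2]⟩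
    · left
      simp only [upd2]
      rw [if_neg]
      intro ⟨h1, h2⟩; exact hb ⟨h1.symm, h2.symm⟩
  all_goals exact Or.inl rfl

lemma bv_val (h : Step Net Val c q a c') (B : Net.Proc) (j : Fin (Net.deg B)) :
    c'.bv B j = c.bv B j ∨
    (q = B ∧ c.pc B = .lp j 0 ∧ c'.bv B j = c.regC (Net.nbr B j) B) := by
  cases h
  case readNbrC i hpc =>
    by_cases hb : q = B
    · subst hb
      by_cases hij : i = j
      · subst hij; right; exact ⟨rfl, hpc, by simp [Function.update]⟩
      · left; simp [Function.update, Ne.symm hij]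
    · left; simp [Function.update, Ne.symm hb]
  all_goals exact Or.inl rfl

end Inv

lemma frame_interval (e : Exec Net Val) (p : Net.Proc) {t u : ℕ} (htu : t ≤ u)
    (h : ∀ v, t ≤ v → v < u → e.sched v ≠ p) :
    (e.cfg u).pc p = (e.cfg t).pc p ∧ (e.cfg u).bv p = (e.cfg t).bv p ∧
    (e.cfg u).cv p = (e.cfg t).cv p ∧ (e.cfg u).lv p = (e.cfg t).lv p := by
  induction u, htu using Nat.le_induction with
  | base => exact ⟨rfl, rfl, rfl, rfl⟩
  | succ v hv ih =>
    have hne : p ≠ e.sched v := Ne.symm (h v hv (Nat.lt_succ_self v))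
    have hf := step_frame (e.step v) p hne
    have ih' := ih (fun w hw1 hw2 => h w hw1 (hw2.trans (Nat.lt_succ_self v)))
    exact ⟨hf.1.trans ih'.1, hf.2.1.trans ih'.2.1, hf.2.2.1.trans ih'.2.2.1,
      hf.2.2.2.trans ih'.2.2.2⟩

/-- Next step of `p`: a time `u ≥ t` at which `p` is scheduled, with local state
unchanged from `t`. -/
lemma next_step (e : Exec Net Val) (hf : e.Fair) (p : Net.Proc) (t : ℕ) :
    ∃ u, t ≤ u ∧ e.sched u = p ∧
      (e.cfg u).pc p = (e.cfg t).pc p ∧ (e.cfg u).bv p = (e.cfg t).bv p ∧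
      (e.cfg u).cv p = (e.cfg t).cv p ∧ (e.cfg u).lv p = (e.cfg t).lv p := by
  obtain ⟨u, hu, hs, hmin⟩ := exists_next e hf p t
  exact ⟨u, hu, hs, frame_interval e p hu hmin⟩

/-- Measure: an upper bound on the number of steps of `p` needed to reach
`lp i0 0`. -/
def M (n i0 : ℕ) : PC n → ℕ
  | .wr j k => (3*n - (3*j.1+k.1)) + 6*i0
  | .lp j k =>
      if 6*j.1+k.1 < 6*i0 then 6*i0 - (6*j.1+k.1)
      else if 6*j.1+k.1 = 6*i0 then 0
      else (6*n - (6*j.1+k.1)) + 1 + 3*n + 6*i0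

@[simp] lemma fin3_0 : ((0 : Fin 3) : ℕ) = 0 := rfl
@[simp] lemma fin3_1 : ((1 : Fin 3) : ℕ) = 1 := rfl
@[simp] lemma fin3_2 : ((2 : Fin 3) : ℕ) = 2 := rfl
@[simp] lemma fin6_0 : ((0 : Fin 6) : ℕ) = 0 := rfl
@[simp] lemma fin6_1 : ((1 : Fin 6) : ℕ) = 1 := rfl
@[simp] lemma fin6_2 : ((2 : Fin 6) : ℕ) = 2 := rfl
@[simp] lemma fin6_3 : ((3 : Fin 6) : ℕ) = 3 := rfl
@[simp] lemma fin6_4 : ((4 : Fin 6) : ℕ) = 4 := rfl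
@[simp] lemma fin6_5 : ((5 : Fin 6) : ℕ) = 5 := rfl

lemma finSucc?_eq_some {n : ℕ} (i : Fin n) (h : i.1+1 < n) :
    finSucc? i = some ⟨i.1+1, h⟩ := dif_pos h

lemma finSucc?_eq_none {n : ℕ} (i : Fin n) (h : ¬ i.1+1 < n) :
    finSucc? i = none := dif_neg h

lemma M_decrease {c c' : Config Net Val} {q : Net.Proc} {a : Act Net.Proc Val}
    (h : Step Net Val c q a c') (i0 : Fin (Net.deg q))
    (hne : c.pc q ≠ PC.lp i0 0) :
    M (Net.deg q) i0.1 (c'.pc q) < M (Net.deg q) i0.1 (c.pc q) := by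
  have hn : 0 < Net.deg q := Net.deg_pos q
  have hi0 : i0.1 < Net.deg q := i0.2
  cases h
  case writeW i v hpc =>
    have hi : i.1 < Net.deg q := i.2
    rw [hpc]; simp [M, Function.update_self]; omega
  case readOwnC i hpc =>
    have hi : i.1 < Net.deg q := i.2
    rw [hpc]; simp [M, Function.update_self]; omega
  case writeOwnC i hpc =>
    have hi : i.1 < Net.deg q := i.2
    rw [hpc]
    rcases Nat.lt_or_ge (i.1+1) (Net.deg q) with hlt | hge
    · simp [M, finSucc?_eq_some i hlt]; omega
    · simp [M, finSucc?_eq_none i (by omega)]; split_ifs <;> omega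
  case readNbrC i hpc =>
    have hi : i.1 < Net.deg q := i.2
    have hii : i.1 ≠ i0.1 := by
      intro hc
      exact hne (hpc.trans (by congr 1; exact Fin.ext hc))
    rw [hpc]; simp [M, Function.update_self]; split_ifs <;> omega
  case readOwnCC i hpc =>
    have hi : i.1 < Net.deg q := i.2
    rw [hpc]
    by_cases hb : c.bv q i ≠ c.regCC q (Net.nbr q i) <;>
      simp [M, hb] <;> split_ifs <;> omega
  case readNbrW i hpc =>
    have hi : i.1 < Net.deg q := i.2
    rw [hpc]; simp [M, Function.update_self]; split_ifs <;> omega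
  case writeOwnCC i hpc =>
    have hi : i.1 < Net.deg q := i.2
    rw [hpc]; simp [M, Function.update_self]; split_ifs <;> omega
  case readOwnC' i hpc =>
    have hi : i.1 < Net.deg q := i.2
    rw [hpc]; simp [M, Function.update_self]; split_ifs <;> omega
  case readNbrCC i hpc =>
    have hi : i.1 < Net.deg q := i.2
    rw [hpc]
    rcases Nat.lt_or_ge (i.1+1) (Net.deg q) with hlt | hge
    · simp [M, finSucc?_eq_some i hlt]; split_ifs <;> omega
    · by_cases hb : ∀ j, c.cv q j = Function.update (c.lv q) i (c.regCC (Net.nbr q i) q) j <;>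
        simp [M, finSucc?_eq_none i (by omega), hb] <;> split_ifs <;> omega

/-- Any process is infinitely often scheduled while at location `lp i0 0`. -/
lemma reach_lp0 (e : Exec Net Val) (hf : e.Fair) (p : Net.Proc)
    (i0 : Fin (Net.deg p)) (t : ℕ) :
    ∃ u, t ≤ u ∧ e.sched u = p ∧ (e.cfg u).pc p = PC.lp i0 0 := by
  suffices H : ∀ m t, M (Net.deg p) i0.1 ((e.cfg t).pc p) ≤ m →
      ∃ u, t ≤ u ∧ e.sched u = p ∧ (e.cfg u).pc p = PC.lp i0 0 from
    H _ t le_rfl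
  intro m
  induction m using Nat.strong_induction_on with
  | _ m ih =>
    intro t hm
    obtain ⟨u, htu, hs, hpc, -, -, -⟩ := next_step e hf p t
    by_cases htar : (e.cfg u).pc p = PC.lp i0 0
    · exact ⟨u, htu, hs, htar⟩
    · have hst := e.step u
      rw [hs] at hst
      have hdec := M_decrease hst i0 htar
      rw [hpc] at hdec
      have : M (Net.deg p) i0.1 ((e.cfg (u+1)).pc p) < m := lt_of_lt_of_le hdec hm
      obtain ⟨u', hu', hs', hpc'⟩ := ih _ this (u+1) le_rfl
      exact ⟨u', le_trans htu (le_trans (Nat.le_succ u) hu'), hs', hpc'⟩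

section Main

variable (e : Exec Net Val) (hf : e.Fair) (A : Net.Proc) (i : Fin (Net.deg A)) (t : ℕ)
variable (H : ∀ u, t ≤ u → ¬ WritesW e A (Net.nbr A i) u)

include hf H in
/-- If `A` never writes `Write_{AB_i}` after `t`, it is never at `wr j 0` with
`j ≤ i` after `t`. -/
lemma no_wr_le : ∀ u, t ≤ u → ∀ j : Fin (Net.deg A),
    (e.cfg u).pc A = PC.wr j 0 → j.1 ≤ i.1 → False := by
  suffices Hm : ∀ m u, t ≤ u → ∀ j : Fin (Net.deg A), i.1 - j.1 ≤ m →
      (e.cfg u).pc A = PC.wr j 0 → j.1 ≤ i.1 → False from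
    fun u hu j h1 h2 => Hm _ u hu j le_rfl h1 h2
  intro m
  induction m using Nat.strong_induction_on with
  | _ m ih =>
    intro u hu j hm hpc hji
    obtain ⟨u1, hu1, hs1, hpc1, -, -, -⟩ := next_step e hf A u
    rw [hpc] at hpc1
    have hst1 := e.step u1
    rw [hs1] at hst1
    obtain ⟨⟨v, hact⟩, hpc1'⟩ := inv_wr0 hst1 hpc1
    by_cases hji' : j = i
    · subst hji'
      exact H u1 (le_trans hu hu1) ⟨hs1, v, hact⟩
    · have hjlt : j.1 < i.1 := lt_of_le_of_ne hji (fun hc => hji' (Fin.ext hc))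
      obtain ⟨u2, hu2, hs2, hpc2, -, -, -⟩ := next_step e hf A (u1+1)
      rw [hpc1'] at hpc2
      have hst2 := e.step u2
      rw [hs2] at hst2
      have hpc2' := inv_wr1 hst2 hpc2
      obtain ⟨u3, hu3, hs3, hpc3, -, -, -⟩ := next_step e hf A (u2+1)
      rw [hpc2'] at hpc3
      have hst3 := e.step u3
      rw [hs3] at hst3
      have hpc3' := inv_wr2 hst3 hpc3
      have hlt : j.1 + 1 < Net.deg A := lt_of_le_of_lt hjlt i.2
      rw [finSucc?_eq_some j hlt] at hpc3'
      exact ih (i.1 - (j.1+1)) (by omega) (u3+1) (by omega) ⟨j.1+1, hlt⟩ le_rfl hpc3' hjlt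

include hf H in
lemma inLoop_invariant : ∀ u, t ≤ u → InLoop (e.cfg u) A → InLoop (e.cfg (u+1)) A := by
  intro u hu ⟨jj, kk, hpc⟩
  by_cases hs : e.sched u = A
  · have hst := e.step u
    rw [hs] at hst
    fin_cases kk
    · exact ⟨_, _, (inv_lp0 hst hpc).1⟩
    · have hpc' := (inv_lp1 hst hpc).1
      by_cases hb : (e.cfg u).bv A jj ≠ (e.cfg u).regCC A (Net.nbr A jj)
      · rw [if_pos hb] at hpc'; exact ⟨_, _, hpc'⟩
      · rw [if_neg hb] at hpc'; exact ⟨_, _, hpc'⟩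
    · exact ⟨_, _, (inv_lp2 hst hpc).1⟩
    · exact ⟨_, _, (inv_lp3 hst hpc).1⟩
    · exact ⟨_, _, (inv_lp4 hst hpc).1⟩
    · have hpc' := (inv_lp5 hst hpc).1
      rcases Nat.lt_or_ge (jj.1+1) (Net.deg A) with hlt | hge
      · rw [finSucc?_eq_some jj hlt] at hpc'
        exact ⟨_, _, hpc'⟩
      · rw [finSucc?_eq_none jj (by omega)] at hpc'
        simp only [] at hpc'
        by_cases hb : ∀ j', (e.cfg u).cv A j' =
            Function.update ((e.cfg u).lv A) jj ((e.cfg u).regCC (Net.nbr A jj) A) j'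
        · rw [if_pos hb] at hpc'
          exact (no_wr_le e hf A i t H (u+1) (le_trans hu (Nat.le_succ u)) ⟨0, Net.deg_pos A⟩
            hpc' (Nat.zero_le _)).elim
        · rw [if_neg hb] at hpc'
          exact ⟨_, _, hpc'⟩
  · have := (step_frame (e.step u) A (Ne.symm hs)).1
    exact ⟨jj, kk, this.trans hpc⟩

end Main

section Main2

variable (e : Exec Net Val) (hf : e.Fair) (A : Net.Proc) (i : Fin (Net.deg A)) (t : ℕ)
variable (H : ∀ u, t ≤ u → ¬ WritesW e A (Net.nbr A i) u)

include hf H in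
lemma exists_T : ∃ T, t ≤ T ∧ ∀ u, T ≤ u → InLoop (e.cfg u) A := by
  obtain ⟨T, hT, hs, hpc⟩ := reach_lp0 e hf A ⟨0, Net.deg_pos A⟩ t
  refine ⟨T, hT, fun u hu => ?_⟩
  induction u, hu using Nat.le_induction with
  | base => exact ⟨_, _, hpc⟩
  | succ v hv ihv => exact inLoop_invariant e hf A i t H v (le_trans hT hv) ihv

lemma regC_stable (T : ℕ) (hT : ∀ u, T ≤ u → InLoop (e.cfg u) A) :
    ∀ u, T ≤ u → (e.cfg u).regC A = (e.cfg T).regC A := by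
  intro u hu
  induction u, hu using Nat.le_induction with
  | base => rfl
  | succ v hv ihv =>
    by_cases hs : e.sched v = A
    · have hst := e.step v
      obtain ⟨jj, kk, hpc⟩ := hT v hv
      have : ∀ i', (e.cfg v).pc (e.sched v) ≠ PC.wr i' 2 := by
        rw [hs, hpc]; intro i' hc; cases hc
      rw [congrFun (regC_frame_loop hst this) A, ihv]
    · exact (regC_frame_ne (e.step v) A hs).trans ihv

include hf in
/-- Stabilization of `CheckControl_{BA}` for a neighbour `B = nbr A j`, assuming
`Control_{A·}` is stable from `T` on. -/
lemma stabilizeB (T : ℕ) (j : Fin (Net.deg A))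
    (hstab : ∀ u, T ≤ u → (e.cfg u).regC A = (e.cfg T).regC A) :
    ∃ S, T ≤ S ∧ ∀ u, S ≤ u →
      (e.cfg u).regCC (Net.nbr A j) A = (e.cfg T).regC A (Net.nbr A j) := by
  set B := Net.nbr A j with hB
  set κ := (e.cfg T).regC A B with hκ
  have hBA : B ≠ A := Net.nbr_ne A j
  obtain ⟨j', hj'⟩ := Net.nbr_symm A j
  -- step 1 : B scheduled at lp j' 0 after T
  obtain ⟨u1, hu1, hs1, hpc1⟩ := reach_lp0 e hf B j' T
  have hst1 := e.step u1
  rw [hs1] at hst1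
  have hinv1 := inv_lp0 hst1 hpc1
  -- step 2 : bv B j' = κ from u1+1 on
  have hbv : ∀ u, u1 + 1 ≤ u → (e.cfg u).bv B j' = κ := by
    intro u hu
    induction u, hu using Nat.le_induction with
    | base =>
      rw [hinv1.2.2.2.1, Function.update_self, hj', hstab u1 (le_trans hu1 (le_refl u1))]
    | succ v hv ihv =>
      rcases bv_val (e.step v) B j' with hsame | ⟨-, -, hval⟩
      · rw [hsame]; exact ihv
      · rw [hval, hj', hstab v (le_trans hu1 (le_trans (Nat.le_succ u1) hv))]
  -- step 3 : a time u3 with regCC B A = κ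
  have hu3 : ∃ u3, u1 + 1 ≤ u3 ∧ (e.cfg u3).regCC B A = κ := by
    obtain ⟨u2, hu2, hs2, hpc2, hbv2, -, -⟩ := next_step e hf B (u1+1)
    rw [hinv1.1] at hpc2
    have hst2 := e.step u2
    rw [hs2] at hst2
    have hinv2 := inv_lp1 hst2 hpc2
    by_cases hbd : (e.cfg u2).bv B j' ≠ (e.cfg u2).regCC B (Net.nbr B j')
    · -- goes to lp j' 2, then lp j' 3, then writes
      rw [if_pos hbd] at hinv2
      obtain ⟨u4, hu4, hs4, hpc4, -, -, -⟩ := next_step e hf B (u2+1)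
      rw [hinv2.1] at hpc4
      have hst4 := e.step u4
      rw [hs4] at hst4
      have hinv4 := inv_lp2 hst4 hpc4
      obtain ⟨u5, hu5, hs5, hpc5, -, -, -⟩ := next_step e hf B (u4+1)
      rw [hinv4.1] at hpc5
      have hst5 := e.step u5
      rw [hs5] at hst5
      have hinv5 := inv_lp3 hst5 hpc5
      refine ⟨u5+1, by omega, ?_⟩
      rw [hinv5.2.2.2.2.2]
      have : (e.cfg u5).bv B j' = κ := hbv u5 (by omega)
      simp [upd2, hj', this]; exact fun h => (h hj'.symm).elim
    · rw [not_not] at hbd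
      refine ⟨u2, hu2, ?_⟩
      rw [hj'] at hbd
      rw [← hbd]
      exact hbv u2 hu2
  obtain ⟨u3, hu31, hu3v⟩ := hu3
  refine ⟨u3, by omega, fun u hu => ?_⟩
  induction u, hu using Nat.le_induction with
  | base => exact hu3v
  | succ v hv ihv =>
    rcases regCC_val (e.step v) B A with hsame | ⟨-, i', hi', -, hval⟩
    · rw [hsame]; exact ihv
    · have : i' = j' := Net.nbr_inj B (hi'.trans hj'.symm)
      subst this
      rw [hval]
      exact hbv v (by omega)

end Main2

section Pass

variable (e : Exec Net Val) (hf : e.Fair) (A : Net.Proc)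

include hf in
lemma pass_false (T S : ℕ) (hTS : T ≤ S)
    (hLoop : ∀ u, T ≤ u → InLoop (e.cfg u) A)
    (hstab : ∀ u, T ≤ u → (e.cfg u).regC A = (e.cfg T).regC A)
    (hS : ∀ (j : Fin (Net.deg A)) (u : ℕ), S ≤ u →
      (e.cfg u).regCC (Net.nbr A j) A = (e.cfg T).regC A (Net.nbr A j)) :
    False := by
  set κ : Fin (Net.deg A) → Bool := fun j => (e.cfg T).regC A (Net.nbr A j) with hκ
  obtain ⟨v0, hv0, hs0, hpc0⟩ := reach_lp0 e hf A ⟨0, Net.deg_pos A⟩ S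
  suffices Hm : ∀ m (w : ℕ) (j : Fin (Net.deg A)), Net.deg A - j.1 ≤ m → S ≤ w →
      (e.cfg w).pc A = PC.lp j 0 →
      (∀ j' : Fin (Net.deg A), j'.1 < j.1 →
        (e.cfg w).cv A j' = κ j' ∧ (e.cfg w).lv A j' = κ j') → False from
    Hm (Net.deg A) v0 ⟨0, Net.deg_pos A⟩ (by omega) hv0 hpc0
      (fun j' hj' => absurd hj' (Nat.not_lt_zero _))
  intro m
  induction m using Nat.strong_induction_on with
  | _ m ih =>
    intro w j hm hw hpc hgood
    -- next A-step at lp j 0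
    obtain ⟨u0, hu0, hs0', hpc0', -, hcv0, hlv0⟩ := next_step e hf A w
    rw [hpc] at hpc0'
    have hst0 := e.step u0
    rw [hs0'] at hst0
    have hinv0 := inv_lp0 hst0 hpc0'
    -- reach lp j 4 with cv/lv unchanged from w
    have h4 : ∃ u4, w ≤ u4 ∧ e.sched u4 = A ∧ (e.cfg u4).pc A = PC.lp j 4 ∧
        (e.cfg u4).cv A = (e.cfg w).cv A ∧ (e.cfg u4).lv A = (e.cfg w).lv A := by
      obtain ⟨u1, hu1, hs1, hpc1, -, hcv1, hlv1⟩ := next_step e hf A (u0+1)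
      rw [hinv0.1] at hpc1
      rw [hinv0.2.1, hcv0] at hcv1
      rw [hinv0.2.2.1, hlv0] at hlv1
      have hst1 := e.step u1
      rw [hs1] at hst1
      have hinv1 := inv_lp1 hst1 hpc1
      by_cases hbd : (e.cfg u1).bv A j ≠ (e.cfg u1).regCC A (Net.nbr A j)
      · rw [if_pos hbd] at hinv1
        obtain ⟨u2, hu2, hs2, hpc2, -, hcv2, hlv2⟩ := next_step e hf A (u1+1)
        rw [hinv1.1] at hpc2
        rw [hinv1.2.1, hcv1] at hcv2
        rw [hinv1.2.2.1, hlv1] at hlv2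
        have hst2 := e.step u2
        rw [hs2] at hst2
        have hinv2 := inv_lp2 hst2 hpc2
        obtain ⟨u3, hu3, hs3, hpc3, -, hcv3, hlv3⟩ := next_step e hf A (u2+1)
        rw [hinv2.1] at hpc3
        rw [hinv2.2.1, hcv2] at hcv3
        rw [hinv2.2.2.1, hlv2] at hlv3
        have hst3 := e.step u3
        rw [hs3] at hst3
        have hinv3 := inv_lp3 hst3 hpc3
        obtain ⟨u4, hu4, hs4, hpc4, -, hcv4, hlv4⟩ := next_step e hf A (u3+1)
        rw [hinv3.1] at hpc4
        rw [hinv3.2.1, hcv3] at hcv4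
        rw [hinv3.2.2.1, hlv3] at hlv4
        exact ⟨u4, by omega, hs4, hpc4, hcv4, hlv4⟩
      · rw [if_neg hbd] at hinv1
        obtain ⟨u4, hu4, hs4, hpc4, -, hcv4, hlv4⟩ := next_step e hf A (u1+1)
        rw [hinv1.1] at hpc4
        rw [hinv1.2.1, hcv1] at hcv4
        rw [hinv1.2.2.1, hlv1] at hlv4
        exact ⟨u4, by omega, hs4, hpc4, hcv4, hlv4⟩
    obtain ⟨u4, hu4, hs4, hpc4, hcv4, hlv4⟩ := h4
    have hst4 := e.step u4
    rw [hs4] at hst4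
    have hinv4 := inv_lp4 hst4 hpc4
    have hcvnew : (e.cfg (u4+1)).cv A = Function.update ((e.cfg w).cv A) j (κ j) := by
      have hreg4 : (e.cfg u4).regC A (Net.nbr A j) = κ j :=
        congrFun (hstab u4 (le_trans hTS (le_trans hw hu4))) (Net.nbr A j)
      rw [hinv4.2.1, hcv4, hreg4]
    -- next A-step at lp j 5
    obtain ⟨u5, hu5, hs5, hpc5, -, hcv5, hlv5⟩ := next_step e hf A (u4+1)
    rw [hinv4.1] at hpc5
    rw [hcvnew] at hcv5
    rw [hinv4.2.2.1, hlv4] at hlv5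
    have hst5 := e.step u5
    rw [hs5] at hst5
    have hinv5 := inv_lp5 hst5 hpc5
    have hregcc : (e.cfg u5).regCC (Net.nbr A j) A = κ j :=
      hS j u5 (by omega)
    have hlvnew : (e.cfg (u5+1)).lv A = Function.update ((e.cfg w).lv A) j (κ j) := by
      rw [hinv5.2.1, hlv5, hregcc]
    rcases Nat.lt_or_ge (j.1+1) (Net.deg A) with hlt | hge
    · -- continue with next neighbour
      have hpcnew := hinv5.1
      rw [finSucc?_eq_some j hlt] at hpcnew
      have hcvnew' : (e.cfg (u5+1)).cv A = Function.update ((e.cfg w).cv A) j (κ j) := by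
        rw [hinv5.2.2.1, hcv5]
      refine ih (Net.deg A - (j.1+1)) (by omega) (u5+1) ⟨j.1+1, hlt⟩ le_rfl (by omega)
        hpcnew (fun j' hj' => ?_)
      rw [hcvnew', hlvnew]
      by_cases hjj : j' = j
      · subst hjj
        simp [Function.update]
      · have hj'lt : j'.1 < j.1 := by
          have h1 : j'.1 < j.1 + 1 := hj'
          have h2 : j'.1 ≠ j.1 := fun hc => hjj (Fin.ext hc)
          omega
        rw [Function.update_of_ne hjj, Function.update_of_ne hjj]
        exact hgood j' hj'lt
    · -- last neighbour : the exit test succeeds, contradiction with hLoop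
      have hpcnew := hinv5.1
      rw [finSucc?_eq_none j (by omega)] at hpcnew
      simp only [] at hpcnew
      have hcond : ∀ j'' : Fin (Net.deg A), (e.cfg u5).cv A j'' =
          Function.update ((e.cfg u5).lv A) j ((e.cfg u5).regCC (Net.nbr A j) A) j'' := by
        intro j''
        rw [hcv5, hlv5, hregcc]
        by_cases hjj : j'' = j
        · subst hjj; simp [Function.update]
        · have hj'lt : j''.1 < j.1 := by
            simp only [Fin.ext_iff] at hjj
            have := j''.2
            omega
          rw [Function.update_of_ne hjj, Function.update_of_ne hjj]
          exact (hgood j'' hj'lt).1.trans (hgood j'' hj'lt).2.symm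
      rw [if_pos hcond] at hpcnew
      obtain ⟨jj, kk, hl⟩ := hLoop (u5+1) (by omega)
      rw [hpcnew] at hl
      cases hl

end Pass

end QRproof

open QR in
/-- Let `A` be a process executing the quasi rendezvous protocol.
Whatever the (fair) execution, `A` writes an infinite number of times into each of
its registers `Write_{AB_i}`, for every neighbour `B_i` of `A`. -/
theorem quasi_rendezvous_writes_infinitely_often (Net : Network) (Val : Type)
    (e : Exec Net Val) (hfair : e.Fair) (A : Net.Proc) (i : Fin (Net.deg A)) (t : ℕ) :
    ∃ u, t ≤ u ∧ WritesW e A (Net.nbr A i) u := by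
  by_contra hcon
  push_neg at hcon
  have H : ∀ u, t ≤ u → ¬ WritesW e A (Net.nbr A i) u := hcon
  obtain ⟨T, hT, hLoop⟩ := QRproof.exists_T e hfair A i t H
  have hstab := QRproof.regC_stable e A T hLoop
  have hSj := fun j : Fin (Net.deg A) => QRproof.stabilizeB e hfair A T j hstab
  choose Sf hSf1 hSf2 using hSj
  exact QRproof.pass_false e hfair A T (T + Finset.univ.sup Sf) (Nat.le_add_right _ _) hLoop
    hstab
    (fun j u hu => hSf2 j u (le_trans
      (le_trans (Finset.le_sup (Finset.mem_univ j)) (Nat.le_add_left _ _)) hu))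
end
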